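/- Let N ≥ 1 and let p_{ij}, d_{ij} : ℝ^N → ℝ (1 ≤ i,j ≤ N) be nonnegative, continuously differentiable functions with p_{ij}(z) = d_{ji}(z) and p_{ii}(z) = d_{ii}(z) = 0 for all z. Set P_i = Σ_j p_{ij} and D_i = Σ_j d_{ij}. Let y : [t_n, t_n + T] → ℝ^N solve y_i' = P_i(y) − D_i(y) with y(t_n) = yⁿ where all yⁿ_i > 0. Suppose σ : (0,T) → ℝ^N takes positive values with σ_i(Δt) = yⁿ_i + O(Δt) as Δt → 0⁺, and suppose Y : (0,T) → ℝ^N satisfies, for every Δt ∈ (0,T) and every i, the implicit relation Y_i(Δt) = yⁿ_i + Δt Σ_{j=1}^N ( p_{ij}(yⁿ)·Y_j(Δt)/σ_j(Δt) − d_{ij}(yⁿ)·Y_i(Δt)/σ_i(Δt) ). Then Y_i(Δt) − y_i(t_n + Δt) = O(Δt²) as Δt → 0⁺ for every i. (The one-stage MPRK scheme is first order accurate under the condition σ_i = yⁿ_i + O(Δt).) -/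

import Mathlib

/-- `f(Δt) = O(Δt^m)` as `Δt → 0⁺`. -/
def BigOAtZero (f : ℝ → ℝ) (m : ℕ) : Prop :=
  ∃ C > 0, ∃ δ > 0, ∀ t : ℝ, 0 < t → t < δ → |f t| ≤ C * t ^ m

set_option linter.unusedVariables false

private lemma taylorPart (N : ℕ) (hN : 1 ≤ N)
    (p d : Fin N → Fin N → (Fin N → ℝ) → ℝ)
    (hpC1 : ∀ i j, ContDiff ℝ 1 (p i j)) (hdC1 : ∀ i j, ContDiff ℝ 1 (d i j))
    (P D : Fin N → (Fin N → ℝ) → ℝ)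
    (hP : ∀ i z, P i z = ∑ j, p i j z) (hD : ∀ i z, D i z = ∑ j, d i j z)
    (tn T : ℝ) (hT : 0 < T)
    (y : ℝ → Fin N → ℝ)
    (hy : ∀ (i : Fin N), ∀ t ∈ Set.Icc tn (tn + T),
      HasDerivWithinAt (fun s => y s i) (P i (y t) - D i (y t)) (Set.Icc tn (tn + T)) t)
    (yn : Fin N → ℝ) (hyn : y tn = yn) (i : Fin N) :
    ∃ L ≥ 0, ∀ Δt, 0 < Δt → Δt < T →
      |y (tn + Δt) i - yn i - Δt * (P i yn - D i yn)| ≤ L * Δt ^ 2 := by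
  set I := Set.Icc tn (tn + T) with hI
  have hPC1 : ∀ j, ContDiff ℝ 1 (P j) := by
    intro j
    have : P j = fun z => ∑ k, p j k z := funext (hP j)
    rw [this]; exact ContDiff.sum fun k _ => hpC1 j k
  have hDC1 : ∀ j, ContDiff ℝ 1 (D j) := by
    intro j
    have : D j = fun z => ∑ k, d j k z := funext (hD j)
    rw [this]; exact ContDiff.sum fun k _ => hdC1 j k
  set F : (Fin N → ℝ) → ℝ := fun z => P i z - D i z with hFdef
  have hFC : ContDiff ℝ 1 F := (hPC1 i).sub (hDC1 i)
  set v' : ℝ → (Fin N → ℝ) := fun t j => P j (y t) - D j (y t) with hv'def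
  have hvd : ∀ t ∈ I, HasDerivWithinAt y (v' t) I t := fun t ht =>
    hasDerivWithinAt_pi.2 fun j => hy j t ht
  have hvcont : ContinuousOn y I := fun t ht => (hvd t ht).continuousWithinAt
  set f : ℝ → ℝ := fun t => F (y t) with hfdef
  set f' : ℝ → ℝ := fun t => fderiv ℝ F (y t) (v' t) with hf'def
  have hfd : ∀ t ∈ I, HasDerivWithinAt f (f' t) I t := fun t ht =>
    ((hFC.differentiable one_ne_zero (y t)).hasFDerivAt).comp_hasDerivWithinAt t (hvd t ht)
  -- bound the derivative of f on I
  have hgc : ContinuousOn (fun t => ‖fderiv ℝ F (y t)‖ * ‖v' t‖) I := by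
    have c1 : Continuous (fderiv ℝ F) := hFC.continuous_fderiv one_ne_zero
    have cPD : Continuous (fun z : Fin N → ℝ => fun j => P j z - D j z) :=
      continuous_pi fun j => ((hPC1 j).continuous).sub ((hDC1 j).continuous)
    exact ((c1.comp_continuousOn hvcont).norm).mul ((cPD.comp_continuousOn hvcont).norm)
  obtain ⟨L0, hL0⟩ := isCompact_Icc.exists_bound_of_continuousOn hgc
  set L : ℝ := max L0 0 with hLdef
  have hLnn : 0 ≤ L := le_max_right _ _
  have hf'b : ∀ t ∈ I, |f' t| ≤ L := by
    intro t ht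
    calc |f' t| ≤ ‖fderiv ℝ F (y t)‖ * ‖v' t‖ := (fderiv ℝ F (y t)).le_opNorm (v' t)
      _ ≤ L := by
          have := hL0 t ht
          rw [Real.norm_eq_abs, abs_of_nonneg (by positivity)] at this
          exact le_trans this (le_max_left _ _)
  have hfLip : ∀ t ∈ I, |f t - f tn| ≤ L * (t - tn) := by
    intro t ht
    have := norm_image_sub_le_of_norm_deriv_le_segment' hfd
      (fun x hx => hf'b x (Set.Ico_subset_Icc_self hx)) t ht
    simpa using this
  refine ⟨L, hLnn, fun Δt hΔt hΔT => ?_⟩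
  have hmem : ∀ t ∈ Set.Icc tn (tn + Δt), t ∈ I := by
    intro t ht
    exact ⟨ht.1, le_trans ht.2 (by linarith)⟩
  set h : ℝ → ℝ := fun t => y t i - t * f tn with hhdef
  have hsub : Set.Icc tn (tn + Δt) ⊆ I := hmem
  have hhd : ∀ t ∈ Set.Icc tn (tn + Δt),
      HasDerivWithinAt h (f t - f tn) (Set.Icc tn (tn + Δt)) t := by
    intro t ht
    have h1 : HasDerivWithinAt (fun s => y s i) (f t) (Set.Icc tn (tn + Δt)) t :=
      (hy i t (hmem t ht)).mono hsub
    exact h1.sub ((hasDerivAt_mul_const (f tn)).hasDerivWithinAt)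
  have hbd : ∀ t ∈ Set.Ico tn (tn + Δt), ‖f t - f tn‖ ≤ L * Δt := by
    intro t ht
    have h1 := hfLip t (hmem t (Set.Ico_subset_Icc_self ht))
    rw [Real.norm_eq_abs]
    refine le_trans h1 (mul_le_mul_of_nonneg_left ?_ hLnn)
    have := ht.2; linarith
  have := norm_image_sub_le_of_norm_deriv_le_segment' hhd hbd (tn + Δt)
    (Set.right_mem_Icc.2 (by linarith))
  rw [Real.norm_eq_abs] at this
  have hftn : f tn = P i yn - D i yn := by simp only [hfdef, hFdef, hyn]
  have hytn : y tn i = yn i := by rw [hyn]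
  have heq : h (tn + Δt) - h tn = y (tn + Δt) i - yn i - Δt * (P i yn - D i yn) := by
    simp only [hhdef, hftn, hytn]; ring
  rw [heq] at this
  calc |y (tn + Δt) i - yn i - Δt * (P i yn - D i yn)| ≤ L * Δt * (tn + Δt - tn) := this
    _ = L * Δt ^ 2 := by ring

set_option maxHeartbeats 1000000 in
private lemma schemePart (N : ℕ) (hN : 1 ≤ N)
    (p d : Fin N → Fin N → (Fin N → ℝ) → ℝ)
    (hpnn : ∀ i j z, 0 ≤ p i j z) (hdnn : ∀ i j z, 0 ≤ d i j z)
    (P D : Fin N → (Fin N → ℝ) → ℝ)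
    (hP : ∀ i z, P i z = ∑ j, p i j z) (hD : ∀ i z, D i z = ∑ j, d i j z)
    (T : ℝ) (hT : 0 < T)
    (yn : Fin N → ℝ) (hynpos : ∀ i, 0 < yn i)
    (σ : ℝ → Fin N → ℝ)
    (hσpos : ∀ Δt, 0 < Δt → Δt < T → ∀ i, 0 < σ Δt i)
    (hσO : ∀ i, BigOAtZero (fun Δt => σ Δt i - yn i) 1)
    (Y : ℝ → Fin N → ℝ)
    (hY : ∀ Δt, 0 < Δt → Δt < T → ∀ i,
      Y Δt i = yn i + Δt * ∑ j,
        (p i j yn * Y Δt j / σ Δt j - d i j yn * Y Δt i / σ Δt i))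
    (i : Fin N) :
    ∃ C ≥ 0, ∃ δ > 0, δ ≤ T ∧ ∀ Δt, 0 < Δt → Δt < δ →
      |Y Δt i - yn i - Δt * (P i yn - D i yn)| ≤ C * Δt ^ 2 := by
  have hne : (Finset.univ : Finset (Fin N)).Nonempty := ⟨⟨0, hN⟩, Finset.mem_univ _⟩
  choose Cσ hCσ δσ hδσ hσb using hσO
  set Cs : ℝ := ∑ j, Cσ j with hCsdef
  have hCs : 0 < Cs := Finset.sum_pos (fun j _ => hCσ j) hne
  have hCsb : ∀ j, Cσ j ≤ Cs := fun j =>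
    Finset.single_le_sum (fun k _ => (hCσ k).le) (Finset.mem_univ j)
  set δs : ℝ := Finset.univ.inf' hne δσ with hδsdef
  have hδs : 0 < δs := (Finset.lt_inf'_iff hne).2 fun j _ => hδσ j
  have hδsle : ∀ j, δs ≤ δσ j := fun j => Finset.inf'_le _ (Finset.mem_univ j)
  set ym : ℝ := Finset.univ.inf' hne yn with hymdef
  have hym : 0 < ym := (Finset.lt_inf'_iff hne).2 fun j _ => hynpos j
  have hymle : ∀ j, ym ≤ yn j := fun j => Finset.inf'_le _ (Finset.mem_univ j)
  set K : ℝ := ∑ i', ∑ j, (p i' j yn * (2 / yn j) + d i' j yn * (2 / yn i')) with hKdef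
  have hK : 0 ≤ K := Finset.sum_nonneg fun i' _ => Finset.sum_nonneg fun j _ => by
    have := hpnn i' j yn; have := hdnn i' j yn
    have := (hynpos j).le; have := (hynpos i').le
    positivity
  have hnnK : ∀ k : Fin N, 0 ≤ ∑ j, (p k j yn * (2 / yn j) + d k j yn * (2 / yn k)) := by
    intro k
    refine Finset.sum_nonneg fun j _ => ?_
    have := hpnn k j yn; have := hdnn k j yn
    have := (hynpos j).le; have := (hynpos k).le
    positivity
  have hKb : ∀ i', ∑ j, (p i' j yn * (2 / yn j) + d i' j yn * (2 / yn i')) ≤ K := by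
    intro i'
    exact Finset.single_le_sum (f := fun k => ∑ j, (p k j yn * (2 / yn j) + d k j yn * (2 / yn k)))
      (fun k _ => hnnK k) (Finset.mem_univ i')
  set B : ℝ := ∑ j, yn j with hBdef
  have hB : 0 < B := Finset.sum_pos (fun j _ => hynpos j) hne
  have hBle : ∀ j, yn j ≤ B := fun j =>
    Finset.single_le_sum (fun k _ => (hynpos k).le) (Finset.mem_univ j)
  set δ : ℝ := min (min (min δs (ym / (2 * Cs))) (1 / (2 * K + 1))) T with hδdef
  have hδpos : 0 < δ := by
    refine lt_min (lt_min (lt_min hδs (by positivity)) (by positivity)) hT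
  set C1 : ℝ := 2 * B * K with hC1def
  have hC1 : 0 ≤ C1 := by positivity
  set C2 : ℝ := (C1 + Cs) * 2 / ym with hC2def
  have hC2 : 0 ≤ C2 := by positivity
  set PD : ℝ := ∑ j, (p i j yn + d i j yn) with hPDdef
  have hPD : 0 ≤ PD := Finset.sum_nonneg fun j _ => by
    have := hpnn i j yn; have := hdnn i j yn; linarith
  refine ⟨PD * C2, by positivity, δ, hδpos, min_le_right _ _, fun Δt hΔt hΔδ => ?_⟩
  have hΔT : Δt < T := lt_of_lt_of_le hΔδ (min_le_right _ _)
  have hΔδs : Δt < δs := lt_of_lt_of_le hΔδ (le_trans (min_le_left _ _)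
    (le_trans (min_le_left _ _) (min_le_left _ _)))
  have hΔym : Δt ≤ ym / (2 * Cs) := le_of_lt (lt_of_lt_of_le hΔδ (le_trans (min_le_left _ _)
    (le_trans (min_le_left _ _) (min_le_right _ _))))
  have hΔK : Δt * K ≤ 1 / 2 := by
    have h1 : Δt ≤ 1 / (2 * K + 1) := le_of_lt (lt_of_lt_of_le hΔδ
      (le_trans (min_le_left _ _) (min_le_right _ _)))
    have h2 : Δt * K ≤ (1 / (2 * K + 1)) * K := mul_le_mul_of_nonneg_right h1 hK
    have h3 : (1 / (2 * K + 1)) * K ≤ 1 / 2 := by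
      rw [div_mul_eq_mul_div, one_mul, div_le_iff₀ (by linarith)]
      linarith
    linarith
  -- σ bounds
  have hσd : ∀ j, |σ Δt j - yn j| ≤ Cs * Δt := by
    intro j
    have := hσb j Δt hΔt (lt_of_lt_of_le hΔδs (hδsle j))
    simp only [pow_one] at this
    calc |σ Δt j - yn j| ≤ Cσ j * Δt := this
      _ ≤ Cs * Δt := mul_le_mul_of_nonneg_right (hCsb j) hΔt.le
  have hσlb : ∀ j, yn j / 2 ≤ σ Δt j := by
    intro j
    have h1 := hσd j
    have h2 : Cs * Δt ≤ ym / 2 := by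
      have := mul_le_mul_of_nonneg_left hΔym hCs.le
      calc Cs * Δt ≤ Cs * (ym / (2 * Cs)) := this
        _ = ym / 2 := by field_simp
    have h3 : yn j - σ Δt j ≤ Cs * Δt := le_trans (le_abs_self _) (by rwa [abs_sub_comm])
    have := hymle j
    linarith
  have hσp : ∀ j, 0 < σ Δt j := hσpos Δt hΔt hΔT
  -- the scheme sum
  set S : Fin N → ℝ := fun i' => ∑ j,
    (p i' j yn * Y Δt j / σ Δt j - d i' j yn * Y Δt i' / σ Δt i') with hSdef
  have hYe : ∀ i', Y Δt i' = yn i' + Δt * S i' := fun i' => hY Δt hΔt hΔT i'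
  set M : ℝ := Finset.univ.sup' hne (fun j => |Y Δt j|) with hMdef
  have hMle : ∀ j, |Y Δt j| ≤ M := by
    intro j
    rw [hMdef]
    exact Finset.le_sup' (fun k => |Y Δt k|) (Finset.mem_univ j)
  have hM0 : 0 ≤ M := le_trans (abs_nonneg _) (hMle ⟨0, hN⟩)
  -- bound on S
  have hSb : ∀ i', |S i'| ≤ M * K := by
    intro i'
    have hterm : ∀ j, |p i' j yn * Y Δt j / σ Δt j - d i' j yn * Y Δt i' / σ Δt i'| ≤
        (p i' j yn * (2 / yn j) + d i' j yn * (2 / yn i')) * M := by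
      intro j
      have e1 : |p i' j yn * Y Δt j / σ Δt j| ≤ p i' j yn * (2 / yn j) * M := by
        rw [abs_div, abs_of_pos (hσp j), abs_mul, abs_of_nonneg (hpnn i' j yn)]
        rw [div_le_iff₀ (hσp j)]
        have h1 : p i' j yn * |Y Δt j| ≤ p i' j yn * M :=
          mul_le_mul_of_nonneg_left (hMle j) (hpnn i' j yn)
        have h2 : p i' j yn * M * 1 ≤ p i' j yn * M * ((2 / yn j) * σ Δt j) := by
          have : (1:ℝ) ≤ (2 / yn j) * σ Δt j := by
            rw [div_mul_eq_mul_div, le_div_iff₀ (hynpos j)]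
            have := hσlb j; linarith
          have hpM : 0 ≤ p i' j yn * M := mul_nonneg (hpnn i' j yn) hM0
          exact mul_le_mul_of_nonneg_left this hpM
        calc p i' j yn * |Y Δt j| ≤ p i' j yn * M := h1
          _ = p i' j yn * M * 1 := by ring
          _ ≤ p i' j yn * M * ((2 / yn j) * σ Δt j) := h2
          _ = p i' j yn * (2 / yn j) * M * σ Δt j := by ring
      have e2 : |d i' j yn * Y Δt i' / σ Δt i'| ≤ d i' j yn * (2 / yn i') * M := by
        rw [abs_div, abs_of_pos (hσp i'), abs_mul, abs_of_nonneg (hdnn i' j yn)]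
        rw [div_le_iff₀ (hσp i')]
        have h1 : d i' j yn * |Y Δt i'| ≤ d i' j yn * M :=
          mul_le_mul_of_nonneg_left (hMle i') (hdnn i' j yn)
        have h2 : d i' j yn * M * 1 ≤ d i' j yn * M * ((2 / yn i') * σ Δt i') := by
          have : (1:ℝ) ≤ (2 / yn i') * σ Δt i' := by
            rw [div_mul_eq_mul_div, le_div_iff₀ (hynpos i')]
            have := hσlb i'; linarith
          have hdM : 0 ≤ d i' j yn * M := mul_nonneg (hdnn i' j yn) hM0
          exact mul_le_mul_of_nonneg_left this hdM
        calc d i' j yn * |Y Δt i'| ≤ d i' j yn * M := h1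
          _ = d i' j yn * M * 1 := by ring
          _ ≤ d i' j yn * M * ((2 / yn i') * σ Δt i') := h2
          _ = d i' j yn * (2 / yn i') * M * σ Δt i' := by ring
      calc |p i' j yn * Y Δt j / σ Δt j - d i' j yn * Y Δt i' / σ Δt i'| ≤
          |p i' j yn * Y Δt j / σ Δt j| + |d i' j yn * Y Δt i' / σ Δt i'| := abs_sub _ _
        _ ≤ p i' j yn * (2 / yn j) * M + d i' j yn * (2 / yn i') * M := add_le_add e1 e2
        _ = (p i' j yn * (2 / yn j) + d i' j yn * (2 / yn i')) * M := by ring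
    calc |S i'| ≤ ∑ j, |p i' j yn * Y Δt j / σ Δt j - d i' j yn * Y Δt i' / σ Δt i'| :=
        Finset.abs_sum_le_sum_abs _ _
      _ ≤ ∑ j, (p i' j yn * (2 / yn j) + d i' j yn * (2 / yn i')) * M :=
        Finset.sum_le_sum fun j _ => hterm j
      _ = (∑ j, (p i' j yn * (2 / yn j) + d i' j yn * (2 / yn i'))) * M := by
        rw [Finset.sum_mul]
      _ ≤ K * M := mul_le_mul_of_nonneg_right (hKb i') hM0
      _ = M * K := mul_comm _ _
  -- bound M
  have hMB : M ≤ 2 * B := by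
    obtain ⟨i0, _, hi0⟩ := Finset.exists_mem_eq_sup' hne (fun j => |Y Δt j|)
    have h1 : M = |Y Δt i0| := hi0
    have h2 : |Y Δt i0| ≤ yn i0 + Δt * (M * K) := by
      rw [hYe i0]
      calc |yn i0 + Δt * S i0| ≤ |yn i0| + |Δt * S i0| := abs_add_le _ _
        _ = yn i0 + Δt * |S i0| := by
          rw [abs_of_pos (hynpos i0), abs_mul, abs_of_pos hΔt]
        _ ≤ yn i0 + Δt * (M * K) := by
          have := mul_le_mul_of_nonneg_left (hSb i0) hΔt.le; linarith
    have h3 : Δt * (M * K) ≤ (1/2) * M := by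
      have := mul_le_mul_of_nonneg_right hΔK hM0
      calc Δt * (M * K) = (Δt * K) * M := by ring
        _ ≤ (1/2) * M := this
    have h4 := hBle i0
    rw [h1] at *
    linarith
  have hYd : ∀ j, |Y Δt j - yn j| ≤ C1 * Δt := by
    intro j
    rw [hYe j]
    have : yn j + Δt * S j - yn j = Δt * S j := by ring
    rw [this, abs_mul, abs_of_pos hΔt]
    have h1 : |S j| ≤ 2 * B * K :=
      le_trans (hSb j) (mul_le_mul_of_nonneg_right hMB hK)
    have h2 : Δt * |S j| ≤ Δt * (2 * B * K) := mul_le_mul_of_nonneg_left h1 hΔt.le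
    have h3 : Δt * (2 * B * K) = C1 * Δt := by rw [hC1def]; ring
    linarith
  -- ratio bound
  have hrat : ∀ j, |Y Δt j / σ Δt j - 1| ≤ C2 * Δt := by
    intro j
    have he : Y Δt j / σ Δt j - 1 = (Y Δt j - σ Δt j) / σ Δt j := by
      rw [sub_div, div_self (hσp j).ne']
    rw [he, abs_div, abs_of_pos (hσp j), div_le_iff₀ (hσp j)]
    have h1 : |Y Δt j - σ Δt j| ≤ (C1 + Cs) * Δt := by
      calc |Y Δt j - σ Δt j| ≤ |Y Δt j - yn j| + |yn j - σ Δt j| := abs_sub_le _ _ _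
        _ ≤ C1 * Δt + Cs * Δt := add_le_add (hYd j) (by rw [abs_sub_comm]; exact hσd j)
        _ = (C1 + Cs) * Δt := by ring
    have h2 : (C1 + Cs) * Δt * 1 ≤ (C1 + Cs) * Δt * ((2 / ym) * σ Δt j) := by
      have hx : (1:ℝ) ≤ (2 / ym) * σ Δt j := by
        rw [div_mul_eq_mul_div, le_div_iff₀ hym]
        have := hσlb j; have := hymle j; linarith
      have : 0 ≤ (C1 + Cs) * Δt := by positivity
      exact mul_le_mul_of_nonneg_left hx this
    calc |Y Δt j - σ Δt j| ≤ (C1 + Cs) * Δt := h1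
      _ = (C1 + Cs) * Δt * 1 := by ring
      _ ≤ (C1 + Cs) * Δt * ((2 / ym) * σ Δt j) := h2
      _ = C2 * Δt * σ Δt j := by rw [hC2def]; ring
  -- final estimate
  have hkey : Y Δt i - yn i - Δt * (P i yn - D i yn) =
      Δt * ∑ j, (p i j yn * (Y Δt j / σ Δt j - 1) - d i j yn * (Y Δt i / σ Δt i - 1)) := by
    have e : Y Δt i = yn i + Δt * ∑ j,
        (p i j yn * Y Δt j / σ Δt j - d i j yn * Y Δt i / σ Δt i) := hY Δt hΔt hΔT i
    calc Y Δt i - yn i - Δt * (P i yn - D i yn)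
        = Δt * ((∑ j, (p i j yn * Y Δt j / σ Δt j - d i j yn * Y Δt i / σ Δt i))
            - ∑ j, (p i j yn - d i j yn)) := by
          rw [hP, hD, ← Finset.sum_sub_distrib]
          conv_lhs => rw [e]
          ring
      _ = Δt * ∑ j, ((p i j yn * Y Δt j / σ Δt j - d i j yn * Y Δt i / σ Δt i)
            - (p i j yn - d i j yn)) := by simp only [Finset.sum_sub_distrib]
      _ = Δt * ∑ j, (p i j yn * (Y Δt j / σ Δt j - 1) - d i j yn * (Y Δt i / σ Δt i - 1)) := by
          congr 1
          exact Finset.sum_congr rfl fun j _ => by ring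
  rw [hkey, abs_mul, abs_of_pos hΔt]
  have hsum : |∑ j, (p i j yn * (Y Δt j / σ Δt j - 1) - d i j yn * (Y Δt i / σ Δt i - 1))| ≤
      PD * (C2 * Δt) := by
    calc |∑ j, (p i j yn * (Y Δt j / σ Δt j - 1) - d i j yn * (Y Δt i / σ Δt i - 1))| ≤
        ∑ j, |p i j yn * (Y Δt j / σ Δt j - 1) - d i j yn * (Y Δt i / σ Δt i - 1)| :=
        Finset.abs_sum_le_sum_abs _ _
      _ ≤ ∑ j, (p i j yn + d i j yn) * (C2 * Δt) := by
        apply Finset.sum_le_sum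
        intro j _
        calc |p i j yn * (Y Δt j / σ Δt j - 1) - d i j yn * (Y Δt i / σ Δt i - 1)| ≤
            |p i j yn * (Y Δt j / σ Δt j - 1)| + |d i j yn * (Y Δt i / σ Δt i - 1)| := abs_sub _ _
          _ ≤ p i j yn * (C2 * Δt) + d i j yn * (C2 * Δt) := by
            rw [abs_mul, abs_mul, abs_of_nonneg (hpnn i j yn), abs_of_nonneg (hdnn i j yn)]
            exact add_le_add (mul_le_mul_of_nonneg_left (hrat j) (hpnn i j yn))
              (mul_le_mul_of_nonneg_left (hrat i) (hdnn i j yn))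
          _ = (p i j yn + d i j yn) * (C2 * Δt) := by ring
      _ = PD * (C2 * Δt) := by rw [hPDdef, Finset.sum_mul]
  calc Δt * |∑ j, (p i j yn * (Y Δt j / σ Δt j - 1) - d i j yn * (Y Δt i / σ Δt i - 1))| ≤
      Δt * (PD * (C2 * Δt)) := mul_le_mul_of_nonneg_left hsum hΔt.le
    _ = PD * C2 * Δt ^ 2 := by ring

theorem stmt_10 (N : ℕ) (hN : 1 ≤ N)
    (p d : Fin N → Fin N → (Fin N → ℝ) → ℝ)
    (hpnn : ∀ i j z, 0 ≤ p i j z) (hdnn : ∀ i j z, 0 ≤ d i j z)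
    (hpC1 : ∀ i j, ContDiff ℝ 1 (p i j)) (hdC1 : ∀ i j, ContDiff ℝ 1 (d i j))
    (hcons : ∀ i j z, p i j z = d j i z)
    (hpdiag : ∀ i z, p i i z = 0) (hddiag : ∀ i z, d i i z = 0)
    (P D : Fin N → (Fin N → ℝ) → ℝ)
    (hP : ∀ i z, P i z = ∑ j, p i j z) (hD : ∀ i z, D i z = ∑ j, d i j z)
    (tn T : ℝ) (hT : 0 < T)
    (y : ℝ → Fin N → ℝ)
    (hy : ∀ (i : Fin N), ∀ t ∈ Set.Icc tn (tn + T),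
      HasDerivWithinAt (fun s => y s i) (P i (y t) - D i (y t)) (Set.Icc tn (tn + T)) t)
    (yn : Fin N → ℝ) (hyn : y tn = yn) (hynpos : ∀ i, 0 < yn i)
    (σ : ℝ → Fin N → ℝ)
    (hσpos : ∀ Δt, 0 < Δt → Δt < T → ∀ i, 0 < σ Δt i)
    (hσO : ∀ i, BigOAtZero (fun Δt => σ Δt i - yn i) 1)
    (Y : ℝ → Fin N → ℝ)
    (hY : ∀ Δt, 0 < Δt → Δt < T → ∀ i,
      Y Δt i = yn i + Δt * ∑ j,
        (p i j yn * Y Δt j / σ Δt j - d i j yn * Y Δt i / σ Δt i)) :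
    ∀ i, BigOAtZero (fun Δt => Y Δt i - y (tn + Δt) i) 2 := by
  intro i
  obtain ⟨L, hL, hTay⟩ := taylorPart N hN p d hpC1 hdC1 P D hP hD tn T hT y hy yn hyn i
  obtain ⟨C, hC, δ, hδ, hδT, hSch⟩ :=
    schemePart N hN p d hpnn hdnn P D hP hD T hT yn hynpos σ hσpos hσO Y hY i
  refine ⟨C + L + 1, by linarith, δ, hδ, fun Δt hΔt hΔδ => ?_⟩
  have hΔT : Δt < T := lt_of_lt_of_le hΔδ hδT
  have h1 := hSch Δt hΔt hΔδ
  have h2 := hTay Δt hΔt hΔT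
  have h3 : Y Δt i - y (tn + Δt) i =
      (Y Δt i - yn i - Δt * (P i yn - D i yn)) -
      (y (tn + Δt) i - yn i - Δt * (P i yn - D i yn)) := by ring
  calc |Y Δt i - y (tn + Δt) i| ≤
      |Y Δt i - yn i - Δt * (P i yn - D i yn)| +
      |y (tn + Δt) i - yn i - Δt * (P i yn - D i yn)| := by rw [h3]; exact abs_sub _ _
    _ ≤ C * Δt ^ 2 + L * Δt ^ 2 := add_le_add h1 h2
    _ ≤ (C + L + 1) * Δt ^ 2 := by nlinarith [sq_nonneg Δt]
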